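/- Let I be a finite subset of [0,1] with 0, 1 ∈ I, write I⁺ = I \ {0}, and let F : ℕ → [0,1] be a fuzzy subset of ℕ taking all its values in I. Then the following are equivalent: (i) there exist a nonempty finite alphabet Σ and a fuzzy language L : Σ* → [0,1] taking all its values in I, all of whose t-levels {w ∈ Σ* : L(w) ≥ t} with t ∈ (0,1] are recursively enumerable, such that F(n) = sup { L(w) : w ∈ Σ*, |w| = n } for every n ∈ ℕ; (ii) for every t ∈ I⁺, the t-level {n ∈ ℕ : F(n) ≥ t} is a recursively enumerable subset of ℕ. -/

import Mathlib

open Nat.Partrec (Code)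
open Nat.Partrec.Code

lemma re_proj {β : Type} [Primcodable β] {p : β → Prop} (hp : REPred p)
    (f : β → ℕ) (hf : Computable f) :
    REPred fun n : ℕ => ∃ b, f b = n ∧ p b := by
  unfold REPred at hp ⊢
  obtain ⟨c, hc⟩ := Code.exists_code.1 hp
  have key : ∀ m : ℕ, (∃ s, (evaln s c m).isSome) ↔
      ∃ b, (Encodable.decode m : Option β) = some b ∧ p b := by
    intro m
    have hd : (eval c m).Dom ↔
        ∃ b, (Encodable.decode m : Option β) = some b ∧ p b := by
      rw [hc]
      cases h : (Encodable.decode m : Option β) with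
      | none => simp [h]
      | some b => simp [h, Part.assert]
    rw [← hd]
    constructor
    · rintro ⟨s, hs⟩
      rcases Option.isSome_iff_exists.1 hs with ⟨x, hx⟩
      exact Part.dom_iff_mem.2 ⟨x, evaln_sound hx⟩
    · rintro h
      rcases Part.dom_iff_mem.1 h with ⟨x, hx⟩
      rcases evaln_complete.1 hx with ⟨s, hs⟩
      exact ⟨s, Option.isSome_iff_exists.2 ⟨x, hs⟩⟩
  set q : ℕ → ℕ → Option Unit := fun n m =>
    bif decide (Option.map f (Encodable.decode (α := β) m.unpair.2) = some n)
        && (evaln m.unpair.1 c m.unpair.2).isSome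
    then some () else none with hqdef
  have hq : Computable₂ q := by
    have u1 : Computable fun pr : ℕ × ℕ => pr.2.unpair.1 :=
      Computable.fst.comp (Computable.unpair.comp Computable.snd)
    have u2 : Computable fun pr : ℕ × ℕ => pr.2.unpair.2 :=
      Computable.snd.comp (Computable.unpair.comp Computable.snd)
    have dec : Computable fun pr : ℕ × ℕ => (Encodable.decode pr.2.unpair.2 : Option β) :=
      Computable.decode.comp u2
    have mapf : Computable fun pr : ℕ × ℕ =>
        Option.map f (Encodable.decode (α := β) pr.2.unpair.2) :=
      Computable.option_map dec (hf.comp Computable.snd).to₂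
    have eqb : Computable fun pr : ℕ × ℕ =>
        decide (Option.map f (Encodable.decode (α := β) pr.2.unpair.2) = some pr.1) :=
      Primrec.eq.decide.to_comp.comp mapf (Computable.option_some.comp Computable.fst)
    have evb : Computable fun pr : ℕ × ℕ =>
        (evaln pr.2.unpair.1 c pr.2.unpair.2).isSome :=
      Primrec.option_isSome.to_comp.comp
        (primrec_evaln.to_comp.comp ((u1.pair (Computable.const c)).pair u2))
    have condb : Computable fun pr : ℕ × ℕ =>
        (decide (Option.map f (Encodable.decode (α := β) pr.2.unpair.2) = some pr.1)
          && (evaln pr.2.unpair.1 c pr.2.unpair.2).isSome) :=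
      Primrec.and.to_comp.comp eqb evb
    exact (Computable.cond condb (Computable.const (some ()))
      (Computable.const none)).to₂
  have hdom : ∀ n, (Nat.rfindOpt (q n)).Dom ↔ ∃ b, f b = n ∧ p b := by
    intro n
    rw [Nat.rfindOpt_dom]
    constructor
    · rintro ⟨m, a, ha⟩
      have hs : (q n m).isSome := Option.isSome_iff_exists.2 ⟨a, ha⟩
      have hcond : (decide (Option.map f (Encodable.decode (α := β) m.unpair.2) = some n)
          && (evaln m.unpair.1 c m.unpair.2).isSome) = true := by
        by_contra h
        rw [hqdef] at hs
        beta_reduce at hs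
        simp only [Bool.not_eq_true] at h
        rw [h] at hs
        simp at hs
      rw [Bool.and_eq_true, decide_eq_true_eq] at hcond
      obtain ⟨hmap, hev⟩ := hcond
      obtain ⟨b, hb, hfb⟩ := Option.map_eq_some_iff.1 hmap
      obtain ⟨b', hb', hpb'⟩ := (key m.unpair.2).1 ⟨m.unpair.1, hev⟩
      rw [hb] at hb'
      cases Option.some_injective _ hb'
      exact ⟨b, hfb, hpb'⟩
    · rintro ⟨b, hfb, hpb⟩
      obtain ⟨s, hs⟩ := (key (Encodable.encode b)).2 ⟨b, Encodable.encodek b, hpb⟩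
      refine ⟨Nat.pair s (Encodable.encode b), (), ?_⟩
      have : q n (Nat.pair s (Encodable.encode b)) = some () := by
        rw [hqdef]
        simp [Nat.unpair_pair, Encodable.encodek, hfb, hs]
      simp [this, Option.mem_def]
  exact (Partrec.rfindOpt hq).of_eq fun n => Part.ext' ((hdom n).trans (by simp [Part.assert]))
    (fun _ _ => Subsingleton.elim _ _)

lemma re_comp_length {k : ℕ} {p : ℕ → Prop} (hp : REPred p) :
    REPred fun w : List (Fin k) => p w.length := by
  unfold REPred at hp ⊢
  exact hp.comp Computable.list_length



/-- Proposition 2: an I-valued fuzzy subset F of ℕ is recursively enumerable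
(i.e., arises as F(n) = sup {L(w) : |w| = n} for some recursively enumerable
I-valued fuzzy language L over some nonempty finite alphabet) if and only if
every t-level of F with t ∈ I⁺ is a recursively enumerable subset of ℕ. -/
theorem stmt_6 (I : Set ℝ) (hIfin : I.Finite) (hI : I ⊆ Set.Icc (0:ℝ) 1)
    (h0 : (0:ℝ) ∈ I) (h1 : (1:ℝ) ∈ I)
    (F : ℕ → ℝ) (hF : ∀ n, F n ∈ I) :
    (∃ k : ℕ, 0 < k ∧ ∃ L : List (Fin k) → ℝ,
        (∀ w, L w ∈ I) ∧
        (∀ t : ℝ, 0 < t → t ≤ 1 → REPred (fun w : List (Fin k) => t ≤ L w)) ∧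
        (∀ n : ℕ, F n = sSup {r : ℝ | ∃ w : List (Fin k), w.length = n ∧ L w = r}))
      ↔ (∀ t ∈ I \ {0}, REPred (fun n : ℕ => t ≤ F n)) := by
  constructor
  · rintro ⟨k, hk, L, hLI, hLre, hsup⟩ t ⟨htI, ht0⟩
    have ht0' : (0:ℝ) < t :=
      lt_of_le_of_ne (hI htI).1 (Ne.symm (by simpa using ht0))
    have ht1 : t ≤ 1 := (hI htI).2
    have hSsub : ∀ n, {r : ℝ | ∃ w : List (Fin k), w.length = n ∧ L w = r} ⊆ I := by
      rintro n r ⟨w, -, rfl⟩; exact hLI w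
    have hSfin : ∀ n, Set.Finite {r : ℝ | ∃ w : List (Fin k), w.length = n ∧ L w = r} :=
      fun n => hIfin.subset (hSsub n)
    have hSne : ∀ n, Set.Nonempty {r : ℝ | ∃ w : List (Fin k), w.length = n ∧ L w = r} :=
      fun n => ⟨L (List.replicate n ⟨0, hk⟩), List.replicate n _,
        List.length_replicate, rfl⟩
    have hiff : ∀ n, (t ≤ F n ↔ ∃ w : List (Fin k), w.length = n ∧ t ≤ L w) := by
      intro n
      constructor
      · intro h
        have hmem : F n ∈ {r : ℝ | ∃ w : List (Fin k), w.length = n ∧ L w = r} := by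
          rw [hsup n]; exact (hSne n).csSup_mem (hSfin n)
        obtain ⟨w, hw, hLw⟩ := hmem
        exact ⟨w, hw, hLw ▸ h⟩
      · rintro ⟨w, hw, hLw⟩
        refine hLw.trans ?_
        rw [hsup n]
        exact le_csSup (hSfin n).bddAbove ⟨w, hw, rfl⟩
    have hp := re_proj (hLre t ht0' ht1)
      (fun w : List (Fin k) => w.length) Computable.list_length
    exact hp.of_eq fun n => by
      constructor
      · rintro ⟨w, hw, hLw⟩; exact (hiff n).2 ⟨w, hw, hLw⟩
      · intro h; obtain ⟨w, hw, hLw⟩ := (hiff n).1 h; exact ⟨w, hw, hLw⟩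
  · intro h
    refine ⟨1, one_pos, fun w => F w.length, fun w => hF _, ?_, ?_⟩
    · intro t ht0 ht1
      set s := sInf (I ∩ Set.Ici t) with hs
      have hTne : (I ∩ Set.Ici t).Nonempty := ⟨1, h1, ht1⟩
      have hTfin : (I ∩ Set.Ici t).Finite := hIfin.inter_of_left _
      have hsmem : s ∈ I ∩ Set.Ici t := hTne.csInf_mem hTfin
      have hts : t ≤ s := hsmem.2
      have hsI : s ∈ I \ {0} :=
        ⟨hsmem.1, by simp only [Set.mem_singleton_iff]; intro h0'; rw [h0'] at hts; linarith⟩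
      have key : ∀ n, t ≤ F n ↔ s ≤ F n := by
        intro n
        constructor
        · intro hn
          exact csInf_le hTfin.bddBelow ⟨hF n, hn⟩
        · intro hn; exact le_trans hts hn
      exact (re_comp_length (h s hsI)).of_eq fun w => (key w.length).symm
    · intro n
      have hset : {r : ℝ | ∃ w : List (Fin 1), w.length = n ∧ F w.length = r} = {F n} := by
        ext r
        simp only [Set.mem_setOf_eq, Set.mem_singleton_iff]
        constructor
        · rintro ⟨w, hw, rfl⟩; rw [hw]
        · rintro rfl
          exact ⟨List.replicate n 0, List.length_replicate,
            by rw [List.length_replicate]⟩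
      rw [hset, csSup_singleton]
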